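/- The 2-dimensional complex algebra N²₀₁ with basis e₁, e₂ and the single nonzero product e₁e₁ = e₂ is, up to isomorphism, the unique 2-dimensional one-generated nilpotent Novikov algebra: every 2-dimensional nilpotent Novikov algebra over ℂ generated by one element is isomorphic to N²₀₁. -/

import Mathlib

/-- The 2-dimensional algebra `N²₀₁` over ℂ, with basis `e₁, e₂` and single
nonzero product `e₁e₁ = e₂`. -/
noncomputable def mulN201 (a b : Fin 2 → ℂ) : Fin 2 → ℂ :=
  ![0, a 0 * b 0]

section Aux

variable {A : Type*} [NonUnitalNonAssocRing A] [Module ℂ A]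

/-- The span of products of elements of two submodules. -/
def MMaux (S T : Submodule ℂ A) : Submodule ℂ A :=
  Submodule.span ℂ {z : A | ∃ x ∈ S, ∃ y ∈ T, z = x * y}

lemma MMaux_mono {S S' T T' : Submodule ℂ A} (hS : S ≤ S') (hT : T ≤ T') :
    MMaux S T ≤ MMaux S' T' :=
  Submodule.span_mono (fun _ ⟨x, hx, y, hy, h⟩ => ⟨x, hS hx, y, hT hy, h⟩)

lemma mul_mem_MMaux {S T : Submodule ℂ A} {x y : A} (hx : x ∈ S) (hy : y ∈ T) :
    x * y ∈ MMaux S T :=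
  Submodule.subset_span ⟨x, hx, y, hy, rfl⟩

end Aux

/-- Up to isomorphism, `N²₀₁` is the unique 2-dimensional one-generated
nilpotent Novikov algebra over ℂ: every 2-dimensional nilpotent Novikov
algebra generated by a single element is isomorphic to `N²₀₁`. -/
theorem two_dimensional_one_generated_nilpotent_novikov_unique
    (A : Type*) [NonUnitalNonAssocRing A] [Module ℂ A]
    [SMulCommClass ℂ A A] [IsScalarTower ℂ A A]
    (hrc : ∀ x y z : A, (x * y) * z = (x * z) * y)
    (hls : ∀ x y z : A, (x * y) * z - x * (y * z) = (y * x) * z - y * (x * z))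
    (hdim : Module.finrank ℂ A = 2)
    (hnil : ∃ P : ℕ → Submodule ℂ A,
      P 1 = ⊤ ∧
      (∀ k : ℕ, 1 ≤ k → P (k + 1) =
        ⨆ (i : ℕ) (j : ℕ) (_ : 1 ≤ i) (_ : 1 ≤ j) (_ : i + j = k + 1),
          Submodule.span ℂ {z : A | ∃ x ∈ P i, ∃ y ∈ P j, z = x * y}) ∧
      ∃ n : ℕ, 1 ≤ n ∧ P n = ⊥)
    (hgen : ∃ g : A, ∀ S : Submodule ℂ A, g ∈ S →
      (∀ x ∈ S, ∀ y ∈ S, x * y ∈ S) → S = ⊤) :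
    ∃ φ : A ≃ₗ[ℂ] (Fin 2 → ℂ),
      ∀ a b : A, φ (a * b) = mulN201 (φ a) (φ b) := by
  obtain ⟨P, hP1, hPrec, n, hn1, hPn⟩ := hnil
  have hFD : FiniteDimensional ℂ A := FiniteDimensional.of_finrank_eq_succ hdim
  have hbotne : (⊥ : Submodule ℂ A) ≠ ⊤ := by
    intro h
    have h0 : Module.finrank ℂ (⊥ : Submodule ℂ A) = 0 := finrank_bot ℂ A
    rw [h, finrank_top, hdim] at h0
    exact two_ne_zero h0
  -- lower bounds for the filtration
  have hlow1 : ∀ k : ℕ, 1 ≤ k → MMaux (P k) (P 1) ≤ P (k + 1) := by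
    intro k hk
    rw [hPrec k hk]
    exact le_iSup_of_le k (le_iSup_of_le 1 (le_iSup_of_le hk
      (le_iSup_of_le le_rfl (le_iSup_of_le rfl le_rfl))))
  have hlow2 : ∀ k : ℕ, 1 ≤ k → MMaux (P 1) (P k) ≤ P (k + 1) := by
    intro k hk
    rw [hPrec k hk]
    exact le_iSup_of_le 1 (le_iSup_of_le k (le_iSup_of_le le_rfl
      (le_iSup_of_le hk (le_iSup_of_le (by omega) le_rfl))))
  set Q : Submodule ℂ A := MMaux ⊤ ⊤ with hQdef
  obtain ⟨g, hg⟩ := hgen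
  -- Q is not everything
  have hQne_top : Q ≠ ⊤ := by
    intro hQ
    have htop : ∀ k : ℕ, 1 ≤ k → P k = ⊤ := by
      intro k hk
      induction k, hk using Nat.le_induction with
      | base => exact hP1
      | succ k hk ih =>
        refine top_unique ?_
        calc (⊤ : Submodule ℂ A) = Q := hQ.symm
        _ = MMaux (P k) (P 1) := by rw [ih, hP1]
        _ ≤ P (k + 1) := hlow1 k hk
    have := htop n hn1
    rw [hPn] at this
    exact hbotne this
  -- Q is nonzero
  have hQne_bot : Q ≠ ⊥ := by
    intro hQ
    have hz : ∀ x y : A, x * y = 0 := by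
      intro x y
      have : x * y ∈ Q := mul_mem_MMaux Submodule.mem_top Submodule.mem_top
      rw [hQ] at this
      exact (Submodule.mem_bot ℂ).1 this
    have hS := hg (Submodule.span ℂ {g}) (Submodule.mem_span_singleton_self g)
      (fun x _ y _ => by rw [hz]; exact zero_mem _)
    have h2 : Module.finrank ℂ (Submodule.span ℂ {g} : Submodule ℂ A) = 2 := by
      rw [hS, finrank_top, hdim]
    have h1 : Module.finrank ℂ (Submodule.span ℂ ({g} : Set A)) ≤ 1 := by
      simpa using finrank_span_le_card ({g} : Set A)
    omega
  set Q3 : Submodule ℂ A := MMaux ⊤ Q ⊔ MMaux Q ⊤ with hQ3def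
  have hQ3le : Q3 ≤ Q := sup_le (MMaux_mono le_rfl le_top) (MMaux_mono le_top le_rfl)
  have hQ3ne : Q3 ≠ Q := by
    intro h
    have hQle : ∀ k : ℕ, 1 ≤ k → Q ≤ P k := by
      intro k hk
      induction k, hk using Nat.le_induction with
      | base => rw [hP1]; exact le_top
      | succ k hk ih =>
        calc Q = Q3 := h.symm
        _ ≤ MMaux (P 1) (P k) ⊔ MMaux (P k) (P 1) := by
            rw [hP1]
            exact sup_le_sup (MMaux_mono le_rfl ih) (MMaux_mono ih le_rfl)
        _ ≤ P (k + 1) := sup_le (hlow2 k hk) (hlow1 k hk)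
    have := hQle n hn1
    rw [hPn, le_bot_iff] at this
    exact hQne_bot this
  have hQ3bot : Q3 = ⊥ := by
    have hlt : Q3 < Q := lt_of_le_of_ne hQ3le hQ3ne
    have h1 : Module.finrank ℂ Q3 < Module.finrank ℂ Q :=
      Submodule.finrank_lt_finrank_of_lt hlt
    have h2 : Module.finrank ℂ Q < Module.finrank ℂ A :=
      Submodule.finrank_lt hQne_top
    rw [hdim] at h2
    exact Submodule.finrank_eq_zero.1 (by omega)
  -- all triple products vanish
  have h3l : ∀ x y z : A, x * (y * z) = 0 := by
    intro x y z
    have hm : x * (y * z) ∈ Q3 :=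
      le_sup_left (a := MMaux ⊤ Q) (mul_mem_MMaux Submodule.mem_top
        (mul_mem_MMaux Submodule.mem_top Submodule.mem_top))
    rw [hQ3bot] at hm
    exact (Submodule.mem_bot ℂ).1 hm
  have h3r : ∀ x y z : A, (x * y) * z = 0 := by
    intro x y z
    have hm : (x * y) * z ∈ Q3 :=
      le_sup_right (a := MMaux ⊤ Q) (mul_mem_MMaux
        (mul_mem_MMaux Submodule.mem_top Submodule.mem_top) Submodule.mem_top)
    rw [hQ3bot] at hm
    exact (Submodule.mem_bot ℂ).1 hm
  -- the expansion of products of elements of span {g, g*g}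
  have hexp : ∀ c d c' d' : ℂ,
      (c • g + d • (g * g)) * (c' • g + d' • (g * g)) = (c * c') • (g * g) := by
    intro c d c' d'
    have h1 : g * (g * g) = 0 := h3l g g g
    have h2 : (g * g) * g = 0 := h3r g g g
    have h4 : (g * g) * (g * g) = 0 := h3l (g * g) g g
    simp [add_mul, mul_add, smul_mul_assoc, mul_smul_comm, h1, h2, h4, smul_smul]
    rw [mul_comm c' c]
  -- span {g, g*g} is the whole algebra
  have hgg_mem : g * g ∈ Submodule.span ℂ ({g, g * g} : Set A) :=
    Submodule.subset_span (Or.inr rfl)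
  have hB : Submodule.span ℂ ({g, g * g} : Set A) = ⊤ := by
    refine hg _ (Submodule.subset_span (Or.inl rfl)) ?_
    intro x hx y hy
    obtain ⟨c, d, hcd⟩ := Submodule.mem_span_pair.1 hx
    obtain ⟨c', d', hcd'⟩ := Submodule.mem_span_pair.1 hy
    rw [← hcd, ← hcd', hexp]
    exact Submodule.smul_mem _ _ hgg_mem
  -- build the basis
  have hrange : Set.range ![g, g * g] = ({g, g * g} : Set A) := by
    ext x
    simp [Fin.exists_fin_two]
    tauto
  have hspan : ⊤ ≤ Submodule.span ℂ (Set.range ![g, g * g]) := by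
    rw [hrange, hB]
  have hcard : Fintype.card (Fin 2) = Module.finrank ℂ A := by simp [hdim]
  set b : Module.Basis (Fin 2) ℂ A := basisOfTopLeSpanOfCardEqFinrank ![g, g * g] hspan hcard
    with hbdef
  have hb : ⇑b = ![g, g * g] := coe_basisOfTopLeSpanOfCardEqFinrank _ _ _
  have hb0 : b 0 = g := by rw [hb]; rfl
  have hb1 : b 1 = g * g := by rw [hb]; rfl
  refine ⟨b.equivFun, ?_⟩
  intro a c
  have ha : a = b.equivFun a 0 • g + b.equivFun a 1 • (g * g) := by
    conv_lhs => rw [← b.sum_equivFun a]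
    rw [Fin.sum_univ_two, hb0, hb1]
  have hc : c = b.equivFun c 0 • g + b.equivFun c 1 • (g * g) := by
    conv_lhs => rw [← b.sum_equivFun c]
    rw [Fin.sum_univ_two, hb0, hb1]
  have hac : a * c = (b.equivFun a 0 * b.equivFun c 0) • (g * g) := by
    conv_lhs => rw [ha, hc]
    exact hexp _ _ _ _
  rw [hac, map_smul, ← hb1]
  funext i
  fin_cases i <;>
    simp [mulN201, Module.Basis.equivFun_self]
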